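/- Let p ≥ 1 and n = 2p + 1, with qubits indexed by Fin n and center c = p (zero-based). Define the 2^n × 2^n complex matrix V = (∏_{j ≠ c} exp(−i(π/4)·X_j)) · (∏_{j=1}^{p} exp(−i(π/4)·Z_c Z_{c−j}) · exp(−i(π/4)·Z_c Z_{c+j})), where the product of the two-qubit Z-rotations is applied first. Then there exists a complex number ω with |ω| = 1 such that V|+^n⟩ = ω · (1/√2)(|0^n⟩ + |1^n⟩). -/

import Mathlib

open Matrix

/-- The single-qubit Pauli-X operator on qubit `j`: the permutation matrix flipping bit `j`. -/
noncomputable def XopF {n : ℕ} (j : Fin n) : Matrix (Fin n → Bool) (Fin n → Bool) ℂ :=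
  Matrix.of (fun x y => if y = Function.update x j (! x j) then 1 else 0)

/-- The two-qubit operator `Z_a Z_b`: diagonal with entry `(-1)^{x_a + x_b}`. -/
noncomputable def ZZopF {n : ℕ} (a b : Fin n) : Matrix (Fin n → Bool) (Fin n → Bool) ℂ :=
  Matrix.diagonal (fun x => if x a = x b then 1 else -1)

/-- The state `|+^n⟩`: all entries equal to `2^{-n/2}`. -/
noncomputable def plusF (n : ℕ) : (Fin n → Bool) → ℂ :=
  fun _ => ((1 / Real.sqrt (2 ^ n) : ℝ) : ℂ)

/-- The `n`-qubit GHZ state `(1/√2)(|0^n⟩ + |1^n⟩)`. -/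
noncomputable def ghzF (n : ℕ) : (Fin n → Bool) → ℂ :=
  fun x => if x = (fun _ => false) ∨ x = (fun _ => true) then ((1 / Real.sqrt 2 : ℝ) : ℂ) else 0

/-- The scalar `-i·π/4`. -/
noncomputable def rotAngle : ℂ := -(Complex.I * ((Real.pi / 4 : ℝ) : ℂ))

/-! ### Auxiliary machinery -/

/-- Ring hom from `ℂ × ℂ` to the algebra generated by a square-one matrix. -/
noncomputable def sqOneHom {m : Type*} [Fintype m] [DecidableEq m]
    (A : Matrix m m ℂ) (hA : A * A = 1) : (ℂ × ℂ) →+* Matrix m m ℂ where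
  toFun q := (q.1 / 2) • (1 + A) + (q.2 / 2) • (1 - A)
  map_one' := by
    show ((1:ℂ) / 2) • (1 + A) + ((1:ℂ) / 2) • (1 - A) = 1
    module
  map_zero' := by simp
  map_add' q r := by
    show ((q.1 + r.1) / 2) • (1 + A) + ((q.2 + r.2) / 2) • (1 - A) = _
    module
  map_mul' q r := by
    show ((q.1 * r.1) / 2) • (1 + A) + ((q.2 * r.2) / 2) • (1 - A) =
      ((q.1 / 2) • (1 + A) + (q.2 / 2) • (1 - A)) *
      ((r.1 / 2) • (1 + A) + (r.2 / 2) • (1 - A))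
    simp only [add_mul, mul_add, smul_mul_assoc, mul_smul_comm, smul_smul, mul_one, one_mul,
      sub_mul, mul_sub, hA]
    module

lemma exp_smul_sq_one {m : Type*} [Fintype m] [DecidableEq m]
    (A : Matrix m m ℂ) (hA : A * A = 1) (t : ℂ) :
    NormedSpace.exp (t • A)
      = ((Complex.exp t + Complex.exp (-t)) / 2) • (1 : Matrix m m ℂ)
        + ((Complex.exp t - Complex.exp (-t)) / 2) • A := by
  letI : SeminormedRing (Matrix m m ℂ) := Matrix.linftyOpSemiNormedRing
  letI : NormedRing (Matrix m m ℂ) := Matrix.linftyOpNormedRing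
  letI : NormedAlgebra ℂ (Matrix m m ℂ) := Matrix.linftyOpNormedAlgebra
  have hcont : Continuous (sqOneHom A hA) := by
    show Continuous fun q : ℂ × ℂ => (q.1 / 2) • (1 + A) + (q.2 / 2) • (1 - A)
    fun_prop
  have h2 : NormedSpace.exp ((t, -t) : ℂ × ℂ) = (Complex.exp t, Complex.exp (-t)) := by
    ext
    · rw [Prod.fst_exp, Complex.exp_eq_exp_ℂ]
    · rw [Prod.snd_exp, Complex.exp_eq_exp_ℂ]
  have h3 := NormedSpace.map_exp (sqOneHom A hA) hcont ((t, -t) : ℂ × ℂ)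
  rw [h2] at h3
  have h1 : sqOneHom A hA ((t, -t) : ℂ × ℂ) = t • A := by
    show (t / 2) • (1 + A) + ((-t) / 2) • (1 - A) = t • A
    module
  rw [h1] at h3
  refine Eq.trans h3.symm ?_
  show (Complex.exp t / 2) • (1 + A) + (Complex.exp (-t) / 2) • (1 - A) = _
  module

lemma XopF_sq {n : ℕ} (j : Fin n) : XopF j * XopF j = 1 := by
  ext x y
  rw [Matrix.mul_apply]
  simp only [XopF, Matrix.of_apply, ite_mul, one_mul, zero_mul, Finset.sum_ite_eq',
    Finset.mem_univ, if_true]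
  rw [Function.update_self, Function.update_idem, Bool.not_not, Function.update_eq_self]
  rw [Matrix.one_apply]
  by_cases h : y = x
  · simp [h]
  · simp [h, Ne.symm h]

lemma ZZopF_sq {n : ℕ} (a b : Fin n) : ZZopF a b * ZZopF a b = 1 := by
  ext x y
  rcases eq_or_ne x y with rfl | h
  · rw [ZZopF, Matrix.diagonal_mul_diagonal]
    by_cases h2 : x a = x b <;> simp [h2]
  · rw [ZZopF, Matrix.diagonal_mul_diagonal]
    simp [Matrix.diagonal_apply_ne _ h, Matrix.one_apply_ne h]

lemma XopF_mulVec {n : ℕ} (j : Fin n) (v : (Fin n → Bool) → ℂ) (x : Fin n → Bool) :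
    (XopF j).mulVec v x = v (Function.update x j (! x j)) := by
  rw [Matrix.mulVec, dotProduct]
  simp [XopF, ite_mul, Finset.sum_ite_eq, Finset.mem_univ]

lemma exp_rot_sq : Complex.exp rotAngle * Complex.exp rotAngle = -Complex.I := by
  rw [← Complex.exp_add]
  have h : rotAngle + rotAngle = ((-(Real.pi / 2) : ℝ) : ℂ) * Complex.I := by
    rw [rotAngle]; push_cast; ring
  rw [h, Complex.exp_mul_I, ← Complex.ofReal_cos, ← Complex.ofReal_sin]
  rw [Real.cos_neg, Real.sin_neg, Real.cos_pi_div_two, Real.sin_pi_div_two]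
  push_cast; ring

lemma exp_nrot_sq : Complex.exp (-rotAngle) * Complex.exp (-rotAngle) = Complex.I := by
  rw [← Complex.exp_add]
  have h : -rotAngle + -rotAngle = ((Real.pi / 2 : ℝ) : ℂ) * Complex.I := by
    rw [rotAngle]; push_cast; ring
  rw [h, Complex.exp_mul_I, ← Complex.ofReal_cos, ← Complex.ofReal_sin]
  rw [Real.cos_pi_div_two, Real.sin_pi_div_two]
  push_cast; ring

lemma exp_rot_mul : Complex.exp rotAngle * Complex.exp (-rotAngle) = 1 := by
  rw [← Complex.exp_add]; simp

lemma key_same :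
    (Complex.exp rotAngle + Complex.exp (-rotAngle)) / 2 * Complex.exp rotAngle +
      (Complex.exp rotAngle - Complex.exp (-rotAngle)) / 2 * Complex.exp (-rotAngle)
    = 1 - Complex.I := by
  linear_combination (1/2) * exp_rot_sq - (1/2) * exp_nrot_sq + exp_rot_mul

lemma key_diff :
    (Complex.exp rotAngle + Complex.exp (-rotAngle)) / 2 * Complex.exp (-rotAngle) +
      (Complex.exp rotAngle - Complex.exp (-rotAngle)) / 2 * Complex.exp rotAngle
    = 0 := by
  linear_combination (1/2) * exp_rot_sq + (1/2) * exp_nrot_sq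

/-- the diagonal phase attached to qubit `j` (relative to center `c`). -/
noncomputable def eF {n : ℕ} (c j : Fin n) (x : Fin n → Bool) : ℂ :=
  Complex.exp (rotAngle * (if x c = x j then 1 else -1))

/-- the post-rotation factor for qubit `j`. -/
noncomputable def hF {n : ℕ} (c j : Fin n) (x : Fin n → Bool) : ℂ :=
  if x c = x j then 1 - Complex.I else 0

lemma exp_ZZ {n : ℕ} (c a : Fin n) :
    NormedSpace.exp (rotAngle • ZZopF c a) = Matrix.diagonal (eF c a) := by
  rw [exp_smul_sq_one _ (ZZopF_sq c a)]
  ext x y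
  rcases eq_or_ne x y with rfl | h
  · simp only [Matrix.add_apply, Matrix.smul_apply, Matrix.one_apply_eq,
      Matrix.diagonal_apply_eq, ZZopF, smul_eq_mul, eF]
    by_cases h2 : x c = x a
    · simp only [h2, if_true, if_pos]
      rw [mul_one, mul_one, mul_one]; ring
    · simp only [h2, if_false, if_neg]
      rw [mul_neg_one, mul_neg_one, mul_one]
      ring
  · simp [Matrix.diagonal_apply_ne _ h, Matrix.one_apply_ne h, ZZopF]

lemma diag_list_prod {α : Type*} [Fintype α] [DecidableEq α]
    (L : List (α → ℂ)) :
    (L.map Matrix.diagonal).prod = Matrix.diagonal (fun x => (L.map (fun f => f x)).prod) := by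
  induction L with
  | nil => simp [Matrix.diagonal_one]
  | cons f t ih =>
      simp only [List.map_cons, List.prod_cons, ih, Matrix.diagonal_mul_diagonal]

lemma eF_update_ne {n : ℕ} (c j a : Fin n) (x : Fin n → Bool) (b : Bool)
    (hac : a ≠ c) (haj : a ≠ j) : eF c j (Function.update x a b) = eF c j x := by
  rw [eF, eF, Function.update_of_ne (Ne.symm hac), Function.update_of_ne (Ne.symm haj)]

lemma hF_update_ne {n : ℕ} (c j a : Fin n) (x : Fin n → Bool) (b : Bool)
    (hac : a ≠ c) (haj : a ≠ j) : hF c j (Function.update x a b) = hF c j x := by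
  rw [hF, hF, Function.update_of_ne (Ne.symm hac), Function.update_of_ne (Ne.symm haj)]

lemma X_step {n : ℕ} (c : Fin n) :
    ∀ (L : List (Fin n)), L.Nodup → (∀ j ∈ L, j ≠ c) →
    ∀ (R : (Fin n → Bool) → ℂ), (∀ j ∈ L, ∀ x b, R (Function.update x j b) = R x) →
    ((L.map (fun j => NormedSpace.exp (rotAngle • XopF j))).prod).mulVec
      (fun x => (L.map (fun j => eF c j x)).prod * R x)
    = fun x => (L.map (fun j => hF c j x)).prod * R x := by
  intro L
  induction L with
  | nil => intro _ _ R _; funext x; simp [Matrix.one_mulVec]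
  | cons a t ih =>
      intro hnd hne R hR
      have hat : a ∉ t := (List.nodup_cons.mp hnd).1
      have hndt : t.Nodup := (List.nodup_cons.mp hnd).2
      have hac : a ≠ c := hne a (List.mem_cons_self)
      simp only [List.map_cons, List.prod_cons]
      rw [← Matrix.mulVec_mulVec]
      have hvec : (fun x => eF c a x * ((t.map (fun j => eF c j x)).prod : ℂ) * R x)
          = fun x => ((t.map (fun j => eF c j x)).prod : ℂ) * (eF c a x * R x) := by
        funext x; ring
      rw [hvec, ih hndt (fun j hj => hne j (List.mem_cons_of_mem a hj))
        (fun x => eF c a x * R x)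
        (fun j hj x b => by
          show eF c a (Function.update x j b) * R (Function.update x j b) = eF c a x * R x
          rw [eF_update_ne c a j x b (hne j (List.mem_cons_of_mem a hj))
            (fun h => hat (h ▸ hj)), hR j (List.mem_cons_of_mem a hj) x b])]
      funext x
      rw [exp_smul_sq_one _ (XopF_sq a), Matrix.add_mulVec, Matrix.smul_mulVec,
        Matrix.smul_mulVec, Matrix.one_mulVec]
      simp only [Pi.add_apply, Pi.smul_apply, smul_eq_mul, XopF_mulVec]
      have hHt : ((t.map (fun j => hF c j (Function.update x a (! x a)))).prod : ℂ)
          = (t.map (fun j => hF c j x)).prod := by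
        congr 1
        apply List.map_congr_left
        intro j hj
        exact hF_update_ne c j a x (! x a) hac (fun h => hat (h ▸ hj))
      have hRx : R (Function.update x a (! x a)) = R x :=
        hR a (List.mem_cons_self) x (! x a)
      rw [hHt, hRx]
      have hca : (Function.update x a (! x a)) c = x c :=
        Function.update_of_ne (Ne.symm hac) _ _
      have haa : (Function.update x a (! x a)) a = ! x a := Function.update_self _ _ _
      rw [eF, eF, hF, hca, haa]
      by_cases hx : x c = x a
      · have hx' : ¬ (x c = ! x a) := by simp [hx]
        rw [if_pos hx, if_neg hx', if_pos hx, mul_one, mul_neg_one]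
        linear_combination ((t.map (fun j => hF c j x)).prod * R x) * key_same
      · have hx' : x c = ! x a := by
          cases hb : x a <;> cases hb2 : x c <;> simp_all
        rw [if_neg hx, if_pos hx', if_neg hx, mul_one, mul_neg_one]
        linear_combination ((t.map (fun j => hF c j x)).prod * R x) * key_diff

lemma prod_erase_eq {p n : ℕ} (hn : n = 2*p+1) (c : Fin n) (hc : (c:ℕ) = p)
    (f : Fin n → ℂ) (hfc : f c ≠ 0) :
    (∏ j : Fin p, (f ⟨p - (j.val+1), lt_of_lt_of_eq (by omega) hn.symm⟩ * f ⟨p + (j.val+1), by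
        have := j.isLt; exact lt_of_lt_of_eq (by omega) hn.symm⟩))
      = ∏ j ∈ Finset.univ.erase c, f j := by
  classical
  set g : ℕ → ℂ := fun i => if h : i < n then f ⟨i, h⟩ else 1 with hg
  have hga : ∀ (i : ℕ) (h : i < n), g i = f ⟨i, h⟩ := fun i h => dif_pos h
  have hlow : (∏ j : Fin p, f ⟨p - (j.val+1), lt_of_lt_of_eq (by omega) hn.symm⟩)
      = ∏ i ∈ Finset.range p, g i := by
    have e1 : (∏ j : Fin p, f ⟨p - (j.val+1), lt_of_lt_of_eq (by omega) hn.symm⟩)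
        = ∏ j : Fin p, g (p - (j.val+1)) :=
      Finset.prod_congr rfl (fun j _ => (hga _ (by omega)).symm)
    rw [e1, Fin.prod_univ_eq_prod_range (fun i => g (p - (i+1))) p,
      ← Finset.prod_range_reflect g p]
    exact Finset.prod_congr rfl (fun i hi => by
      congr 1
      have := Finset.mem_range.mp hi
      omega)
  have hhigh : (∏ j : Fin p, f ⟨p + (j.val+1), by have := j.isLt; exact lt_of_lt_of_eq (by omega) hn.symm⟩)
      = ∏ i ∈ Finset.range p, g ((p+1)+i) := by
    have e1 : (∏ j : Fin p, f ⟨p + (j.val+1), by have := j.isLt; exact lt_of_lt_of_eq (by omega) hn.symm⟩)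
        = ∏ j : Fin p, g ((p+1)+j.val) :=
      Finset.prod_congr rfl (fun j _ => by
        rw [hga ((p+1)+j.val) (by have := j.isLt; omega)]
        congr 1
        exact Fin.ext (by simp; omega))
    rw [e1, Fin.prod_univ_eq_prod_range (fun i => g ((p+1)+i)) p]
  have huniv : (∏ j : Fin n, f j) = ∏ i ∈ Finset.range n, g i := by
    rw [← Fin.prod_univ_eq_prod_range g n]
    apply Finset.prod_congr rfl
    intro j _
    rw [hga j.val j.isLt]
  have hsplit : (∏ i ∈ Finset.range n, g i)
      = ((∏ i ∈ Finset.range p, g i) * g p) * ∏ i ∈ Finset.range p, g ((p+1)+i) := by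
    have hn' : n = (p+1) + p := by omega
    rw [hn', Finset.prod_range_add, Finset.prod_range_succ]
  have hgp : g p = f c := by
    rw [hga p (by omega)]
    congr 1
    exact Fin.ext (by simp [hc])
  apply mul_left_cancel₀ hfc
  rw [Finset.mul_prod_erase Finset.univ f (Finset.mem_univ c)]
  rw [Finset.prod_mul_distrib, hlow, hhigh, huniv, hsplit, hgp]
  ring

theorem stmt9 (p n : ℕ) (hp : 1 ≤ p) (hn : n = 2 * p + 1)
    (c : Fin n) (hc : (c : ℕ) = p)
    (V : Matrix (Fin n → Bool) (Fin n → Bool) ℂ)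
    (hV : V =
      (((List.finRange n).filter (fun j => j ≠ c)).map
          (fun j => NormedSpace.exp (rotAngle • XopF j))).prod *
      ((List.finRange p).map
          (fun (j : Fin p) =>
            NormedSpace.exp (rotAngle • ZZopF c ⟨p - (j.val + 1), by omega⟩) *
            NormedSpace.exp (rotAngle • ZZopF c ⟨p + (j.val + 1), by
              have hj := j.isLt
              omega⟩))).prod) :
    ∃ ω : ℂ, ‖ω‖ = 1 ∧ V.mulVec (plusF n) = ω • ghzF n := by
  classical
  set S : ℂ := ((1 / Real.sqrt (2 ^ n) : ℝ) : ℂ) with hS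
  set J : List (Fin n) := (List.finRange n).filter (fun j => j ≠ c) with hJ
  have hJnd : J.Nodup := (List.nodup_finRange n).filter _
  have hJne : ∀ j ∈ J, j ≠ c := by
    intro j hj
    have := List.mem_filter.mp hj
    simpa using this.2
  have hJfin : J.toFinset = Finset.univ.erase c := by
    ext j
    simp [hJ, List.mem_filter, List.mem_finRange, Finset.mem_erase]
  -- the diagonal part
  have hZdiag : ((List.finRange p).map
      (fun (j : Fin p) =>
        NormedSpace.exp (rotAngle • ZZopF c ⟨p - (j.val + 1), by omega⟩) *
        NormedSpace.exp (rotAngle • ZZopF c ⟨p + (j.val + 1), by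
          have hj := j.isLt; omega⟩))).prod
      = Matrix.diagonal (fun x => ∏ j ∈ Finset.univ.erase c, eF c j x) := by
    have h1 : ((List.finRange p).map
        (fun (j : Fin p) =>
          NormedSpace.exp (rotAngle • ZZopF c ⟨p - (j.val + 1), by omega⟩) *
          NormedSpace.exp (rotAngle • ZZopF c ⟨p + (j.val + 1), by
            have hj := j.isLt; omega⟩)))
        = ((List.finRange p).map
            (fun (j : Fin p) => (fun x => eF c ⟨p - (j.val + 1), by omega⟩ x *
              eF c ⟨p + (j.val + 1), by have hj := j.isLt; omega⟩ x))).map Matrix.diagonal := by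
      rw [List.map_map]
      apply List.map_congr_left
      intro j _
      show NormedSpace.exp _ * NormedSpace.exp _ = _
      rw [exp_ZZ, exp_ZZ, Matrix.diagonal_mul_diagonal]
      rfl
    rw [h1, diag_list_prod]
    apply congrArg Matrix.diagonal
    funext x
    rw [List.map_map]
    have h2 : ((List.finRange p).map
        ((fun f => f x) ∘ (fun (j : Fin p) => (fun y => eF c ⟨p - (j.val + 1), by omega⟩ y *
          eF c ⟨p + (j.val + 1), by have hj := j.isLt; omega⟩ y)))).prod
        = ∏ j : Fin p, (eF c ⟨p - (j.val + 1), by omega⟩ x *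
            eF c ⟨p + (j.val + 1), by have hj := j.isLt; omega⟩ x) := by
      rw [Fin.prod_univ_def]
      rfl
    rw [h2]
    exact prod_erase_eq hn c hc (fun j => eF c j x) (Complex.exp_ne_zero _)
  -- evaluate
  have hXlist : ∀ x : Fin n → Bool,
      (∏ j ∈ Finset.univ.erase c, eF c j x) = (J.map (fun j => eF c j x)).prod := by
    intro x
    rw [← hJfin, List.prod_toFinset _ hJnd]
  have hXlist' : ∀ x : Fin n → Bool,
      (J.map (fun j => hF c j x)).prod = ∏ j ∈ Finset.univ.erase c, hF c j x := by
    intro x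
    rw [← hJfin, List.prod_toFinset _ hJnd]
  have hmain : V.mulVec (plusF n)
      = fun x => (∏ j ∈ Finset.univ.erase c, hF c j x) * S := by
    rw [hV, ← Matrix.mulVec_mulVec, hZdiag]
    have hdv : (Matrix.diagonal (fun x => ∏ j ∈ Finset.univ.erase c, eF c j x)).mulVec (plusF n)
        = fun x => (J.map (fun j => eF c j x)).prod * S := by
      funext x
      rw [Matrix.mulVec_diagonal, ← hXlist x]
      rfl
    rw [hdv, X_step c J hJnd hJne (fun _ => S) (fun _ _ _ _ => rfl)]
    funext x
    rw [hXlist' x]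
  -- final evaluation of the product of hF
  have hcard : (Finset.univ.erase c).card = 2 * p := by
    rw [Finset.card_erase_of_mem (Finset.mem_univ c), Finset.card_univ, Fintype.card_fin]
    omega
  have heval : ∀ x : Fin n → Bool, (∏ j ∈ Finset.univ.erase c, hF c j x)
      = (if x = (fun _ => false) ∨ x = (fun _ => true)
          then (1 - Complex.I) ^ (2 * p) else 0) := by
    intro x
    by_cases hx : x = (fun _ => false) ∨ x = (fun _ => true)
    · rw [if_pos hx]
      have hconst : ∀ j, x j = x c := by
        rcases hx with h | h <;> (subst h; intro j; rfl)
      rw [Finset.prod_congr rfl (fun j _ => by rw [hF, if_pos (hconst j).symm]),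
        Finset.prod_const, hcard]
    · rw [if_neg hx]
      have hex : ∃ j, x j ≠ x c := by
        by_contra hall
        push_neg at hall
        have hx2 : x = fun _ => x c := funext hall
        cases hxc : x c
        · exact hx (Or.inl (by rw [hx2, hxc]))
        · exact hx (Or.inr (by rw [hx2, hxc]))
      obtain ⟨j, hj⟩ := hex
      have hjc : j ≠ c := fun h => hj (by rw [h])
      exact Finset.prod_eq_zero (Finset.mem_erase.mpr ⟨hjc, Finset.mem_univ j⟩)
        (by rw [hF, if_neg (fun h => hj h.symm)])
  -- the global phase
  refine ⟨(1 - Complex.I) ^ (2 * p) * S * ((Real.sqrt 2 : ℝ) : ℂ), ?_, ?_⟩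
  · have habsI : ‖(1 - Complex.I)‖ = Real.sqrt 2 := by
      rw [Complex.norm_def]
      congr 1
      simp [Complex.normSq_apply]
      norm_num
    have hsqrt_pos : (0:ℝ) < Real.sqrt (2 ^ n) := by
      apply Real.sqrt_pos.mpr
      positivity
    rw [norm_mul, norm_mul, norm_pow, habsI, hS, Complex.norm_real,
      Complex.norm_real, Real.norm_eq_abs, Real.norm_eq_abs]
    rw [abs_of_pos (by positivity), abs_of_pos (Real.sqrt_pos.mpr (by norm_num))]
    have e1 : Real.sqrt (2 ^ n) = 2 ^ p * Real.sqrt 2 := by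
      rw [hn]
      have h22 : (2:ℝ) ^ (2*p+1) = ((2:ℝ)^p)^2 * 2 := by ring
      rw [h22, Real.sqrt_mul (by positivity), Real.sqrt_sq (by positivity)]
    have e2 : (Real.sqrt 2) ^ (2*p) = 2 ^ p := by
      rw [pow_mul, Real.sq_sqrt (by norm_num : (0:ℝ) ≤ 2)]
    rw [e1, e2]
    have hs2 : Real.sqrt 2 ≠ 0 := ne_of_gt (Real.sqrt_pos.mpr (by norm_num))
    field_simp
  · rw [hmain]
    funext x
    rw [heval x]
    rw [Pi.smul_apply, smul_eq_mul]
    simp only [ghzF]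
    by_cases hx : x = (fun _ => false) ∨ x = (fun _ => true)
    · rw [if_pos hx, if_pos hx]
      have hs : ((Real.sqrt 2 : ℝ) : ℂ) * ((1 / Real.sqrt 2 : ℝ) : ℂ) = 1 := by
        rw [← Complex.ofReal_mul,
          mul_one_div_cancel (ne_of_gt (Real.sqrt_pos.mpr (by norm_num : (0:ℝ) < 2)))]
        exact Complex.ofReal_one
      conv_rhs => rw [mul_assoc, hs, mul_one]
    · rw [if_neg hx, if_neg hx]
      ring
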